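/- Let X be a compact metric space, f : X → X continuous, I and J arcs in X with J ⊆ f(I), and let K₁, K₂ ⊆ J be arcs whose intersection contains at most one point. Then I f-covers K₁ or I f-covers K₂. -/

import Mathlib

/-- `I` is an arc: a homeomorphic image of `[0,1]`. Since `[0,1]` is compact and `X`
is Hausdorff, a continuous injection suffices. -/
def IsArc {X : Type*} [TopologicalSpace X] (I : Set X) : Prop :=
  ∃ φ : ℝ → X, ContinuousOn φ (Set.Icc 0 1) ∧ Set.InjOn φ (Set.Icc 0 1) ∧
    φ '' Set.Icc 0 1 = I

/-- `I` is a free arc: an arc whose "interior part" is open in `X`. -/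
def IsFreeArc {X : Type*} [TopologicalSpace X] (I : Set X) : Prop :=
  ∃ φ : ℝ → X, ContinuousOn φ (Set.Icc 0 1) ∧ Set.InjOn φ (Set.Icc 0 1) ∧
    φ '' Set.Icc 0 1 = I ∧ IsOpen (φ '' Set.Ioo 0 1)

/-- `I` `h`-covers `J`: some subarc of `I` is mapped exactly onto `J` by `h`. -/
def Covers {X : Type*} [TopologicalSpace X] (h : X → X) (I J : Set X) : Prop :=
  ∃ K : Set X, IsArc K ∧ K ⊆ I ∧ h '' K = J


open Set

lemma cross_inc {g : ℝ → ℝ} {p q a b : ℝ} (hpq : p ≤ q)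
    (hg : ContinuousOn g (Icc p q)) (hab : a < b)
    (hp : g p ≤ a) (hq : b ≤ g q) :
    ∃ s u, p ≤ s ∧ s ≤ u ∧ u ≤ q ∧ g '' Icc s u = Icc a b := by
  set B := Icc p q ∩ g ⁻¹' {b} with hB
  have hBsub : B ⊆ Icc p q := inter_subset_left
  have hBne : B.Nonempty := by
    obtain ⟨x, hx, hgx⟩ := intermediate_value_Icc hpq hg ⟨le_trans hp hab.le, hq⟩
    exact ⟨x, hx, hgx⟩
  have hBclosed : IsClosed B := hg.preimage_isClosed_of_isClosed isClosed_Icc isClosed_singleton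
  have hBbdd : BddBelow B := ⟨p, fun x hx => hx.1.1⟩
  set u := sInf B with hu
  have huB : u ∈ B := hBclosed.csInf_mem hBne hBbdd
  have hgu : g u = b := huB.2
  have hpu : p ≤ u := huB.1.1
  have huq : u ≤ q := huB.1.2
  -- now the a-point
  set A := Icc p u ∩ g ⁻¹' {a} with hA
  have hAne : A.Nonempty := by
    obtain ⟨x, hx, hgx⟩ := intermediate_value_Icc hpu (hg.mono (Icc_subset_Icc le_rfl huq))
      ⟨hp, by rw [hgu]; exact hab.le⟩
    exact ⟨x, hx, hgx⟩
  have hAclosed : IsClosed A := (hg.mono (Icc_subset_Icc le_rfl huq)).preimage_isClosed_of_isClosed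
    isClosed_Icc isClosed_singleton
  have hAbdd : BddAbove A := ⟨u, fun x hx => hx.1.2⟩
  set s := sSup A with hs
  have hsA : s ∈ A := hAclosed.csSup_mem hAne hAbdd
  have hgs : g s = a := hsA.2
  have hps : p ≤ s := hsA.1.1
  have hsu : s ≤ u := hsA.1.2
  refine ⟨s, u, hps, hsu, huq, ?_⟩
  have hsubI : Icc s u ⊆ Icc p q := Icc_subset_Icc hps huq
  apply Subset.antisymm
  · rintro y ⟨x, hx, rfl⟩
    constructor
    · by_contra hlt
      push_neg at hlt
      -- g x < a, find a-point in (s, u]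
      obtain ⟨z, hz, hgz⟩ := intermediate_value_Icc hx.2
        (hg.mono (Icc_subset_Icc (le_trans hps hx.1) huq)) (⟨hlt.le, by rw [hgu]; exact hab.le⟩ : a ∈ Icc (g x) (g u))
      have hzA : z ∈ A := ⟨⟨le_trans hps (le_trans hx.1 hz.1), hz.2⟩, hgz⟩
      have : z ≤ s := le_csSup hAbdd hzA
      have hxs : s < x := lt_of_le_of_ne hx.1 (fun h => by rw [← h, hgs] at hlt; exact lt_irrefl a hlt)
      linarith [hz.1]
    · by_contra hlt
      push_neg at hlt
      -- g x > b, find b-point in [s, x) contradicting minimality of u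
      obtain ⟨z, hz, hgz⟩ := intermediate_value_Icc hx.1
        (hg.mono (Icc_subset_Icc hps (le_trans hx.2 huq))) (⟨by rw [hgs]; exact hab.le, hlt.le⟩ : b ∈ Icc (g s) (g x))
      have hzB : z ∈ B := ⟨⟨le_trans hps hz.1, le_trans hz.2 (le_trans hx.2 huq)⟩, hgz⟩
      have : u ≤ z := csInf_le hBbdd hzB
      have hxu : x < u := lt_of_le_of_ne hx.2 (fun h => by rw [h, hgu] at hlt; exact lt_irrefl b hlt)
      linarith [hz.2]
  · have := intermediate_value_Icc hsu (hg.mono hsubI)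
    rw [hgs, hgu] at this
    exact this

/-- Classical crossing lemma, decreasing version (by reflection). -/
lemma cross_dec {g : ℝ → ℝ} {p q a b : ℝ} (hpq : p ≤ q)
    (hg : ContinuousOn g (Icc p q)) (hab : a < b)
    (hp : b ≤ g p) (hq : g q ≤ a) :
    ∃ s u, p ≤ s ∧ s ≤ u ∧ u ≤ q ∧ g '' Icc s u = Icc a b := by
  have hmaps : ∀ x ∈ Icc p q, p + q - x ∈ Icc p q := by
    rintro x ⟨h1, h2⟩; exact ⟨by linarith, by linarith⟩
  have hσ : ContinuousOn (fun x => g (p + q - x)) (Icc p q) :=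
    hg.comp ((continuous_const.sub continuous_id).continuousOn) hmaps
  obtain ⟨s, u, hps, hsu, huq, him⟩ := cross_inc hpq hσ hab
    (by simpa using hq) (by simpa using hp)
  refine ⟨p + q - u, p + q - s, by linarith, by linarith, by linarith, ?_⟩
  have h1 : (fun x => g (p + q - x)) '' Icc s u = g '' ((fun x => p + q - x) '' Icc s u) :=
    (image_comp g (fun x => p + q - x) _)
  rw [h1, image_const_sub_Icc] at him
  exact him
lemma inv_continuousOn {X : Type*} [TopologicalSpace X] [T2Space X] {ψ : ℝ → X}
    (hc : ContinuousOn ψ (Icc 0 1)) (hinj : InjOn ψ (Icc 0 1)) :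
    ∃ r : X → ℝ, ContinuousOn r (ψ '' Icc 0 1) ∧ ∀ x ∈ Icc 0 1, r (ψ x) = x := by
  classical
  set r := Function.invFunOn ψ (Icc 0 1) with hr
  have hleft : ∀ x ∈ Icc (0:ℝ) 1, r (ψ x) = x := fun x hx => hinj.leftInvOn_invFunOn hx
  refine ⟨r, ?_, hleft⟩
  rw [continuousOn_iff_isClosed]
  intro t ht
  refine ⟨ψ '' (t ∩ Icc 0 1), ?_, ?_⟩
  · have hcpt : IsCompact (ψ '' (t ∩ Icc 0 1)) :=
      (isCompact_Icc.inter_left ht).image_of_continuousOn (hc.mono inter_subset_right)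
    exact hcpt.isClosed
  · ext y
    simp only [mem_inter_iff, mem_preimage, mem_image]
    constructor
    · rintro ⟨hyt, x, hx, rfl⟩
      exact ⟨⟨x, ⟨by rwa [hleft x hx] at hyt, hx⟩, rfl⟩, ⟨x, hx, rfl⟩⟩
    · rintro ⟨⟨x, ⟨hxt, hx⟩, rfl⟩, -⟩
      exact ⟨by rwa [hleft x hx], ⟨x, hx, rfl⟩⟩

/-- An arc contained in the arc parametrized by `ψ` corresponds to a nondegenerate
closed subinterval. -/
lemma arc_interval {X : Type*} [TopologicalSpace X] [T2Space X] {ψ : ℝ → X} {r : X → ℝ}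
    (hrc : ContinuousOn r (ψ '' Icc 0 1)) (hrl : ∀ x ∈ Icc 0 1, r (ψ x) = x)
    {K : Set X} (hK : IsArc K) (hKJ : K ⊆ ψ '' Icc 0 1) :
    ∃ a b, 0 ≤ a ∧ a < b ∧ b ≤ 1 ∧ ψ '' Icc a b = K := by
  obtain ⟨χ, hχc, hχi, hχim⟩ := hK
  have hKcpt : IsCompact K := hχim ▸ isCompact_Icc.image_of_continuousOn hχc
  have hKconn : IsConnected K := by
    rw [← hχim]
    exact ⟨(nonempty_Icc.2 zero_le_one).image χ, isPreconnected_Icc.image χ hχc⟩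
  set T := r '' K with hT
  have hTcpt : IsCompact T := hKcpt.image_of_continuousOn (hrc.mono hKJ)
  have hTconn : IsConnected T := hKconn.image r (hrc.mono hKJ)
  have hTIcc : T = Icc (sInf T) (sSup T) := eq_Icc_of_connected_compact hTconn hTcpt
  set a := sInf T
  set b := sSup T
  have hT01 : T ⊆ Icc 0 1 := by
    rintro y ⟨z, hz, rfl⟩
    obtain ⟨x, hx, rfl⟩ := hKJ hz
    rw [hrl x hx]; exact hx
  have hTne : T.Nonempty := hTconn.nonempty
  have h0a : 0 ≤ a := le_csInf hTne (fun y hy => (hT01 hy).1)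
  have hb1 : b ≤ 1 := csSup_le hTne (fun y hy => (hT01 hy).2)
  have hback : ∀ z ∈ K, ψ (r z) = z := by
    intro z hz
    obtain ⟨x, hx, rfl⟩ := hKJ hz
    rw [hrl x hx]
  have himK : ψ '' T = K := by
    apply Subset.antisymm
    · rintro y ⟨w, ⟨z, hz, rfl⟩, rfl⟩
      rwa [hback z hz]
    · intro z hz
      exact ⟨r z, ⟨z, hz, rfl⟩, hback z hz⟩
  have hab : a < b := by
    have hale : a ≤ b := csInf_le_csSup hTne hTcpt.bddBelow hTcpt.bddAbove
    rcases lt_or_eq_of_le hale with h | h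
    · exact h
    · exfalso
      rw [← h] at hTIcc
      -- T = {a}, so K is a singleton, contradicting injectivity of χ
      have hTsing : T = {a} := by
        rw [hTIcc, Icc_self]
      have hKsing : K = {ψ a} := by rw [← himK, hTsing, image_singleton]
      have h0 : χ 0 ∈ K := hχim ▸ mem_image_of_mem χ (left_mem_Icc.2 zero_le_one)
      have h1 : χ 1 ∈ K := hχim ▸ mem_image_of_mem χ (right_mem_Icc.2 zero_le_one)
      rw [hKsing, mem_singleton_iff] at h0 h1
      have : (0:ℝ) = 1 := hχi (left_mem_Icc.2 zero_le_one) (right_mem_Icc.2 zero_le_one)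
        (h0.trans h1.symm)
      norm_num at this
  exact ⟨a, b, h0a, hab, hb1, hTIcc ▸ himK⟩
lemma coverOf {X : Type*} [TopologicalSpace X] {f : X → X} (hf : Continuous f)
    {φ ψ : ℝ → X} {r : X → ℝ}
    (hφc : ContinuousOn φ (Icc 0 1)) (hφi : InjOn φ (Icc 0 1))
    (hrl : ∀ x ∈ Icc 0 1, r (ψ x) = x)
    {a b s u : ℝ} (hab : a < b)
    (h0s : 0 ≤ s) (hu1 : u ≤ 1)
    (hmem : ∀ x ∈ Icc s u, f (φ x) ∈ ψ '' Icc 0 1)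
    (him : (fun x => r (f (φ x))) '' Icc s u = Icc a b) :
    Covers f (φ '' Icc 0 1) (ψ '' Icc a b) := by
  -- first, s < u
  have hsune : s < u := by
    rcases lt_trichotomy s u with h | h | h
    · exact h
    · exfalso
      rw [h, Icc_self, image_singleton] at him
      have ha : a ∈ ({r (f (φ u))} : Set ℝ) := him ▸ left_mem_Icc.2 hab.le
      have hb : b ∈ ({r (f (φ u))} : Set ℝ) := him ▸ right_mem_Icc.2 hab.le
      rw [mem_singleton_iff] at ha hb
      exact absurd (ha.trans hb.symm) hab.ne
    · exfalso
      rw [Icc_eq_empty (not_le.2 h), image_empty] at him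
      exact (Icc_eq_empty_iff.1 him.symm) hab.le
  have hsub : Icc s u ⊆ Icc (0:ℝ) 1 := Icc_subset_Icc h0s hu1
  -- the pointwise identity h x = ψ (r (h x)) on Icc s u
  have hpt : ∀ x ∈ Icc s u, ψ (r (f (φ x))) = f (φ x) := by
    intro x hx
    obtain ⟨y, hy, hye⟩ := hmem x hx
    rw [← hye, hrl y hy]
  refine ⟨φ '' Icc s u, ?_, image_mono (f := φ) hsub, ?_⟩
  · -- IsArc
    refine ⟨fun x => φ ((u - s) * x + s), ?_, ?_, ?_⟩
    · have hmaps : ∀ x ∈ Icc (0:ℝ) 1, (u - s) * x + s ∈ Icc (0:ℝ) 1 := by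
        rintro x ⟨h1, h2⟩
        constructor
        · nlinarith
        · nlinarith
      exact hφc.comp (by fun_prop : Continuous fun x : ℝ => (u - s) * x + s).continuousOn hmaps
    · intro x hx y hy hxy
      have hx' : (u - s) * x + s ∈ Icc s u := by
        obtain ⟨h1, h2⟩ := hx; constructor <;> nlinarith
      have hy' : (u - s) * y + s ∈ Icc s u := by
        obtain ⟨h1, h2⟩ := hy; constructor <;> nlinarith
      have := hφi (hsub hx') (hsub hy') hxy
      have hne : u - s ≠ 0 := by linarith
      exact mul_left_cancel₀ hne (by linarith)
    · rw [show (fun x => φ ((u - s) * x + s)) = φ ∘ (fun x => (u - s) * x + s) from rfl,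
        image_comp, image_affine_Icc' (by linarith : (0:ℝ) < u - s)]
      norm_num
  · -- image equals ψ '' Icc a b
    rw [← image_comp]
    have : (f ∘ φ) '' Icc s u = (fun x => ψ (r (f (φ x)))) '' Icc s u :=
      image_congr (fun x hx => (hpt x hx).symm)
    rw [this, ← image_image (f := fun x => r (f (φ x))) (g := ψ), him]
lemma side {X : Type*} [TopologicalSpace X] [T2Space X]
    {f : X → X} (hf : Continuous f)
    {φ ψ : ℝ → X} {r : X → ℝ}
    (hφc : ContinuousOn φ (Icc 0 1)) (hφi : InjOn φ (Icc 0 1))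
    (hψc : ContinuousOn ψ (Icc 0 1)) (hψi : InjOn ψ (Icc 0 1))
    (hU : IsOpen (ψ '' Ioo 0 1))
    (hrc : ContinuousOn r (ψ '' Icc 0 1)) (hrl : ∀ x ∈ Icc 0 1, r (ψ x) = x)
    {a b c d m t : ℝ}
    (h0a : 0 ≤ a) (hab : a < b) (hbm : b ≤ m) (hmc : m ≤ c) (hcd : c < d) (hd1 : d ≤ 1)
    (hm : m ∈ Ioo (0:ℝ) 1)
    (ht : t ∈ Icc (0:ℝ) 1) (hft : f (φ t) = ψ m)
    (hne : {x | x ∈ Icc t 1 ∧ f (φ x) ∉ ψ '' Ioo 0 1}.Nonempty) :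
    Covers f (φ '' Icc 0 1) (ψ '' Icc a b) ∨ Covers f (φ '' Icc 0 1) (ψ '' Icc c d) := by
  set U := ψ '' Ioo 0 1 with hUdef
  set h : ℝ → X := fun x => f (φ x) with hh
  have hhc : ContinuousOn h (Icc 0 1) := hf.comp_continuousOn hφc
  have hhc' : ContinuousOn h (Icc t 1) := hhc.mono (Icc_subset_Icc ht.1 le_rfl)
  set T := {x | x ∈ Icc t 1 ∧ h x ∉ U} with hTdef
  have hTclosed : IsClosed T := by
    have : T = Icc t 1 ∩ h ⁻¹' Uᶜ := rfl
    rw [this]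
    exact hhc'.preimage_isClosed_of_isClosed isClosed_Icc hU.isClosed_compl
  have hTbdd : BddBelow T := ⟨t, fun x hx => hx.1.1⟩
  set β := sInf T with hβdef
  have hβT : β ∈ T := hTclosed.csInf_mem hne hTbdd
  have htβ : t ≤ β := le_csInf hne (fun x hx => hx.1.1)
  have hβ1 : β ≤ 1 := hβT.1.2
  have htU : h t ∈ U := by
    rw [hh]; simp only []
    rw [hft]; exact mem_image_of_mem ψ hm
  have htltβ : t < β := lt_of_le_of_ne htβ (fun h' => hβT.2 (h' ▸ htU))
  have hIco : ∀ x ∈ Ico t β, h x ∈ U := by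
    rintro x ⟨hx1, hx2⟩
    by_contra hxU
    have hxT : x ∈ T := ⟨⟨hx1, le_trans hx2.le hβ1⟩, hxU⟩
    exact absurd (csInf_le hTbdd hxT) (not_le.2 hx2)
  have hJclosed : IsClosed (ψ '' Icc 0 1) :=
    (isCompact_Icc.image_of_continuousOn hψc).isClosed
  have hUJ : U ⊆ ψ '' Icc 0 1 := image_mono (f := ψ) Ioo_subset_Icc_self
  -- h β ∈ closure U ⊆ J
  have hβJ : h β ∈ ψ '' Icc 0 1 := by
    have hclIco : closure (Ico t β) = Icc t β := closure_Ico htltβ.ne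
    have hcont : ContinuousOn h (closure (Ico t β)) := by
      rw [hclIco]; exact hhc.mono (Icc_subset_Icc ht.1 hβ1)
    have : h '' closure (Ico t β) ⊆ closure (h '' Ico t β) := hcont.image_closure
    have hβin : h β ∈ closure (h '' Ico t β) := by
      apply this
      exact mem_image_of_mem h (hclIco ▸ right_mem_Icc.2 htltβ.le)
    have : closure (h '' Ico t β) ⊆ ψ '' Icc 0 1 :=
      closure_minimal (fun y ⟨x, hx, he⟩ => he ▸ hUJ (hIco x hx)) hJclosed
    exact this hβin
  have hmemJ : ∀ x ∈ Icc t β, h x ∈ ψ '' Icc 0 1 := by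
    rintro x ⟨hx1, hx2⟩
    rcases lt_or_eq_of_le hx2 with h' | h'
    · exact hUJ (hIco x ⟨hx1, h'⟩)
    · rwa [h']
  -- value of r at h β
  obtain ⟨y, hy01, hyeq⟩ := hβJ
  have hy01' : y = 0 ∨ y = 1 := by
    by_contra hcon
    push_neg at hcon
    have : y ∈ Ioo (0:ℝ) 1 :=
      ⟨lt_of_le_of_ne hy01.1 (Ne.symm hcon.1), lt_of_le_of_ne hy01.2 hcon.2⟩
    exact hβT.2 (hyeq ▸ mem_image_of_mem ψ this)
  set g : ℝ → ℝ := fun x => r (h x) with hg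
  have hgc : ContinuousOn g (Icc t β) :=
    hrc.comp (hhc.mono (Icc_subset_Icc ht.1 hβ1)) hmemJ
  have hgt : g t = m := by
    rw [hg]; simp only []
    rw [hh]; simp only []
    rw [hft, hrl m (Ioo_subset_Icc_self hm)]
  have hgβ : g β = y := by
    rw [hg]; simp only []
    rw [← hyeq, hrl y hy01]
  rcases hy01' with hy | hy
  · -- g β = 0 : cover [a,b] (left disjunct)
    left
    obtain ⟨s, u, hts, hsu, huβ, him⟩ := cross_dec htltβ.le hgc hab
      (by rw [hgt]; exact hbm) (by rw [hgβ, hy]; exact h0a)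
    exact coverOf hf hφc hφi hrl hab (le_trans ht.1 hts) (le_trans huβ hβ1)
      (fun x hx => hmemJ x ⟨le_trans hts hx.1, le_trans hx.2 huβ⟩) him
  · -- g β = 1 : cover [c,d] (right disjunct)
    right
    obtain ⟨s, u, hts, hsu, huβ, him⟩ := cross_inc htltβ.le hgc hcd
      (by rw [hgt]; exact hmc) (by rw [hgβ, hy]; exact hd1)
    exact coverOf hf hφc hφi hrl hcd (le_trans ht.1 hts) (le_trans huβ hβ1)
      (fun x hx => hmemJ x ⟨le_trans hts hx.1, le_trans hx.2 huβ⟩) him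
theorem stmt_9 {X : Type*} [MetricSpace X] [CompactSpace X]
    (f : X → X) (hf : Continuous f)
    (I J K₁ K₂ : Set X) (hI : IsArc I) (hJ : IsFreeArc J)
    (hK₁ : IsArc K₁) (hK₂ : IsArc K₂)
    (hJI : J ⊆ f '' I) (h1 : K₁ ⊆ J) (h2 : K₂ ⊆ J)
    (hint : (K₁ ∩ K₂).Subsingleton) :
    Covers f I K₁ ∨ Covers f I K₂ := by
  obtain ⟨φ, hφc, hφi, hφim⟩ := hI
  obtain ⟨ψ, hψc, hψi, hψim, hUopen⟩ := hJ
  subst hφim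
  subst hψim
  obtain ⟨r, hrc, hrl⟩ := inv_continuousOn hψc hψi
  obtain ⟨a₁, b₁, h0a₁, hab₁, hb₁1, hK₁im⟩ := arc_interval hrc hrl hK₁ h1
  obtain ⟨a₂, b₂, h0a₂, hab₂, hb₂1, hK₂im⟩ := arc_interval hrc hrl hK₂ h2
  -- ordering of the two intervals
  have horder : b₁ ≤ a₂ ∨ b₂ ≤ a₁ := by
    by_contra hcon
    push_neg at hcon
    obtain ⟨h₁', h₂'⟩ := hcon
    set cc := max a₁ a₂
    set dd := min b₁ b₂
    have hccdd : cc < dd := max_lt (lt_min hab₁ h₂') (lt_min h₁' hab₂)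
    have hsub1 : Icc cc dd ⊆ Icc a₁ b₁ := Icc_subset_Icc (le_max_left _ _) (min_le_left _ _)
    have hsub2 : Icc cc dd ⊆ Icc a₂ b₂ := Icc_subset_Icc (le_max_right _ _) (min_le_right _ _)
    have hmem : ∀ x ∈ Icc cc dd, ψ x ∈ K₁ ∩ K₂ := by
      intro x hx
      exact ⟨hK₁im ▸ mem_image_of_mem ψ (hsub1 hx), hK₂im ▸ mem_image_of_mem ψ (hsub2 hx)⟩
    have h01 : Icc cc dd ⊆ Icc (0:ℝ) 1 :=
      (hsub1.trans (Icc_subset_Icc h0a₁ hb₁1))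
    have : ψ cc = ψ dd := hint (hmem cc (left_mem_Icc.2 hccdd.le))
      (hmem dd (right_mem_Icc.2 hccdd.le))
    have := hψi (h01 (left_mem_Icc.2 hccdd.le)) (h01 (right_mem_Icc.2 hccdd.le)) this
    exact absurd this hccdd.ne
  -- core: for ordered intervals produce the disjunction
  have core : ∀ a b c d : ℝ, 0 ≤ a → a < b → b ≤ c → c < d → d ≤ 1 →
      Covers f (φ '' Icc 0 1) (ψ '' Icc a b) ∨ Covers f (φ '' Icc 0 1) (ψ '' Icc c d) := by
    intro a b c d h0a hab hbc hcd hd1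
    set m := (b + c) / 2 with hmdef
    have hbm : b ≤ m := by rw [hmdef]; linarith
    have hmc : m ≤ c := by rw [hmdef]; linarith
    have hm : m ∈ Ioo (0:ℝ) 1 := ⟨by linarith, by linarith⟩
    -- a preimage of ψ m
    have hmJ : ψ m ∈ f '' (φ '' Icc 0 1) := hJI (mem_image_of_mem ψ (Ioo_subset_Icc_self hm))
    rw [← image_comp] at hmJ
    obtain ⟨t, ht01, hft'0⟩ := hmJ
    have hft : f (φ t) = ψ m := hft'0
    by_cases hR : {x | x ∈ Icc t 1 ∧ f (φ x) ∉ ψ '' Ioo 0 1}.Nonempty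
    · exact side hf hφc hφi hψc hψi hUopen hrc hrl h0a hab hbm hmc hcd hd1 hm ht01 hft hR
    · -- use the reflected parametrization of I
      set φ' : ℝ → X := fun x => φ (1 - x) with hφ'def
      have hmaps : ∀ x ∈ Icc (0:ℝ) 1, 1 - x ∈ Icc (0:ℝ) 1 := by
        rintro x ⟨hx1, hx2⟩; exact ⟨by linarith, by linarith⟩
      have hφ'c : ContinuousOn φ' (Icc 0 1) :=
        hφc.comp ((continuous_const.sub continuous_id).continuousOn) hmaps
      have hφ'i : InjOn φ' (Icc 0 1) := by
        intro x hx y hy hxy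
        have := hφi (hmaps x hx) (hmaps y hy) hxy
        linarith [this]
      have hφ'im : φ' '' Icc 0 1 = φ '' Icc 0 1 := by
        rw [hφ'def, show (fun x => φ (1 - x)) = φ ∘ (fun x => 1 - x) from rfl, image_comp,
          image_const_sub_Icc]
        norm_num
      set t' := 1 - t with ht'def
      have ht'01 : t' ∈ Icc (0:ℝ) 1 := hmaps t ht01
      have hft' : f (φ' t') = ψ m := by
        rw [hφ'def]; simp only []
        rw [ht'def, show 1 - (1 - t) = t by ring, hft]
      by_cases hL : {x | x ∈ Icc t' 1 ∧ f (φ' x) ∉ ψ '' Ioo 0 1}.Nonempty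
      · have := side hf hφ'c hφ'i hψc hψi hUopen hrc hrl h0a hab hbm hmc hcd hd1 hm ht'01 hft' hL
        rwa [hφ'im] at this
      · -- both sides empty: h maps all of [0,1] into U, contradiction with ψ 0 ∈ J
        exfalso
        rw [not_nonempty_iff_eq_empty, eq_empty_iff_forall_notMem] at hR hL
        have hall : ∀ x ∈ Icc (0:ℝ) 1, f (φ x) ∈ ψ '' Ioo 0 1 := by
          intro x hx
          rcases le_total t x with hcase | hcase
          · by_contra hnot
            exact hR x ⟨⟨hcase, hx.2⟩, hnot⟩
          · by_contra hnot
            refine hL (1 - x) ⟨⟨by rw [ht'def]; linarith, by linarith [hx.1]⟩, ?_⟩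
            rw [hφ'def]; simp only []
            rw [show 1 - (1 - x) = x by ring]
            exact hnot
        have h0J : ψ 0 ∈ f '' (φ '' Icc 0 1) :=
          hJI (mem_image_of_mem ψ (left_mem_Icc.2 zero_le_one))
        rw [← image_comp] at h0J
        obtain ⟨x, hx01, hfx0⟩ := h0J
        have hfx : f (φ x) = ψ 0 := hfx0
        obtain ⟨y, hy, hye⟩ := hall x hx01
        rw [hfx] at hye
        have := hψi (Ioo_subset_Icc_self hy) (left_mem_Icc.2 zero_le_one) hye
        rw [this] at hy
        exact lt_irrefl 0 hy.1
  rcases horder with h | h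
  · have := core a₁ b₁ a₂ b₂ h0a₁ hab₁ h hab₂ hb₂1
    rwa [hK₁im, hK₂im] at this
  · have := (core a₂ b₂ a₁ b₁ h0a₂ hab₂ h hab₁ hb₁1).symm
    rwa [hK₁im, hK₂im] at this
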